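/- With the definitions below, for every r with 0 < r < R₂ the function f is twice differentiable at r and satisfies c·f(r) + f′(r)·(r·κ*(r) + A) + (D²/2)·f″(r) ≤ 0; moreover f″(r) ≤ 0 for every r ∈ (0,∞) with r ≠ R₂. -/

import Mathlib

/-- `κ*(r) = κ(r)` if `r·κ(r) ≥ −A`, and `κ*(r) = −A/r` otherwise. -/
noncomputable def kstar (κ : ℝ → ℝ) (A r : ℝ) : ℝ :=
  if -A ≤ r * κ r then κ r else -A / r

/-- `φ(r) = exp(−(2/D²) ∫₀ʳ (u·κ*(u) + A) du)`. -/
noncomputable def phi (κ : ℝ → ℝ) (A D r : ℝ) : ℝ :=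
  Real.exp (-(2 / D ^ 2) * ∫ u in (0:ℝ)..r, (u * kstar κ A u + A))

/-- `Φ(r) = ∫₀ʳ φ(s) ds`. -/
noncomputable def PhiF (κ : ℝ → ℝ) (A D r : ℝ) : ℝ :=
  ∫ s in (0:ℝ)..r, phi κ A D s

/-- `c = D² / (4 ∫₀^{R₂} Φ(s) φ(s)⁻¹ ds)`. -/
noncomputable def cconst (κ : ℝ → ℝ) (A D R₂ : ℝ) : ℝ :=
  D ^ 2 / (4 * ∫ s in (0:ℝ)..R₂, PhiF κ A D s * (phi κ A D s)⁻¹)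

/-- `g(r) = 1 − (2c/D²) ∫₀ʳ Φ(s) φ(s)⁻¹ ds`. -/
noncomputable def gfun (κ : ℝ → ℝ) (A D R₂ r : ℝ) : ℝ :=
  1 - (2 * cconst κ A D R₂ / D ^ 2) * ∫ s in (0:ℝ)..r, PhiF κ A D s * (phi κ A D s)⁻¹

/-- `f(r) = ∫₀ʳ φ(s)·g(s ∧ R₂) ds`. -/
noncomputable def ffun (κ : ℝ → ℝ) (A D R₂ r : ℝ) : ℝ :=
  ∫ s in (0:ℝ)..r, phi κ A D s * gfun κ A D R₂ (min s R₂)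

/-! ### Auxiliary "clean" versions built from a globally continuous integrand -/

/-- Globally continuous version of `u ↦ u·κ*(u) + A` (agrees with it on `Ici 0`). -/
noncomputable def hfun (κ : ℝ → ℝ) (A u : ℝ) : ℝ := max (u * κ (max u 0) + A) 0

noncomputable def phit (κ : ℝ → ℝ) (A D r : ℝ) : ℝ :=
  Real.exp (-(2 / D ^ 2) * ∫ u in (0:ℝ)..r, hfun κ A u)

noncomputable def Phit (κ : ℝ → ℝ) (A D r : ℝ) : ℝ := ∫ s in (0:ℝ)..r, phit κ A D s

noncomputable def Gt (κ : ℝ → ℝ) (A D r : ℝ) : ℝ :=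
  ∫ s in (0:ℝ)..r, Phit κ A D s * (phit κ A D s)⁻¹

noncomputable def ct (κ : ℝ → ℝ) (A D R₂ : ℝ) : ℝ := D ^ 2 / (4 * Gt κ A D R₂)

noncomputable def gT (κ : ℝ → ℝ) (A D R₂ r : ℝ) : ℝ :=
  1 - (2 * ct κ A D R₂ / D ^ 2) * Gt κ A D r

noncomputable def ft (κ : ℝ → ℝ) (A D R₂ r : ℝ) : ℝ :=
  ∫ s in (0:ℝ)..r, phit κ A D s * gT κ A D R₂ (min s R₂)

lemma hasDerivAt_primitive0 {f : ℝ → ℝ} (hf : Continuous f) (r : ℝ) :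
    HasDerivAt (fun x => ∫ u in (0:ℝ)..x, f u) (f r) r :=
  intervalIntegral.integral_hasDerivAt_right (hf.intervalIntegrable _ _)
    (hf.stronglyMeasurable.stronglyMeasurableAtFilter) hf.continuousAt

section aux

variable {κ : ℝ → ℝ} {A D R₁ R₂ : ℝ}

lemma hfun_nonneg (κ : ℝ → ℝ) (A u : ℝ) : 0 ≤ hfun κ A u := le_max_right _ _

lemma hfun_cont (hκc : ContinuousOn κ (Set.Ici 0)) : Continuous (hfun κ A) := by
  have h1 : Continuous fun u : ℝ => κ (max u 0) :=
    hκc.comp_continuous (continuous_id.max continuous_const) (fun x => Set.mem_Ici.2 (le_max_right _ _))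
  exact ((continuous_id.mul h1).add continuous_const).max continuous_const

lemma hfun_eq (hA : 0 ≤ A) {u : ℝ} (hu : 0 ≤ u) :
    u * kstar κ A u + A = hfun κ A u := by
  have hm : max u 0 = u := max_eq_left hu
  unfold kstar hfun
  rw [hm]
  by_cases h : -A ≤ u * κ u
  · rw [if_pos h, max_eq_left (by linarith)]
  · rw [if_neg h, max_eq_right (by linarith)]
    have hu0 : u ≠ 0 := by
      rintro rfl; exact h (by simpa using neg_nonpos_of_nonneg hA)
    field_simp
    ring

variable (hA : 0 ≤ A) (hD : 0 < D) (hκc : ContinuousOn κ (Set.Ici 0))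
include hκc

lemma phit_pos (r : ℝ) : 0 < phit κ A D r := Real.exp_pos _

lemma phit_hasDeriv (r : ℝ) :
    HasDerivAt (phit κ A D) (-(2 / D ^ 2) * hfun κ A r * phit κ A D r) r := by
  have h1 := (hasDerivAt_primitive0 (hfun_cont (A := A) hκc) r).const_mul (-(2 / D ^ 2))
  have h2 := h1.exp
  unfold phit
  convert h2 using 1
  ring

lemma phit_cont : Continuous (phit κ A D) := by
  have : Differentiable ℝ (phit κ A D) := fun r => (phit_hasDeriv hκc r).differentiableAt
  exact this.continuous

lemma Phit_hasDeriv (r : ℝ) : HasDerivAt (Phit κ A D) (phit κ A D r) r :=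
  hasDerivAt_primitive0 (phit_cont hκc) r

lemma Phit_cont : Continuous (Phit κ A D) :=
  (Differentiable.continuous (fun r => (Phit_hasDeriv hκc r).differentiableAt))

lemma Phit_nonneg {r : ℝ} (hr : 0 ≤ r) : 0 ≤ Phit κ A D r :=
  intervalIntegral.integral_nonneg hr (fun u _ => (phit_pos hκc u).le)

lemma Phit_pos {r : ℝ} (hr : 0 < r) : 0 < Phit κ A D r :=
  intervalIntegral.intervalIntegral_pos_of_pos
    (((phit_cont hκc)).intervalIntegrable _ _) (fun u => phit_pos hκc u) hr

lemma q_cont : Continuous (fun s => Phit κ A D s * (phit κ A D s)⁻¹) :=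
  (Phit_cont hκc).mul ((phit_cont hκc).inv₀ (fun s => (phit_pos hκc s).ne'))

lemma Gt_hasDeriv (r : ℝ) :
    HasDerivAt (Gt κ A D) (Phit κ A D r * (phit κ A D r)⁻¹) r :=
  hasDerivAt_primitive0 (q_cont hκc) r

lemma Gt_nonneg {r : ℝ} (hr : 0 ≤ r) : 0 ≤ Gt κ A D r :=
  intervalIntegral.integral_nonneg hr
    (fun u hu => mul_nonneg (Phit_nonneg hκc hu.1) (inv_nonneg.2 (phit_pos hκc u).le))

lemma Gt_pos {r : ℝ} (hr : 0 < r) : 0 < Gt κ A D r := by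
  apply intervalIntegral.intervalIntegral_pos_of_pos_on
    ((q_cont hκc).intervalIntegrable _ _)
    (fun u hu => mul_pos (Phit_pos hκc hu.1) (inv_pos.2 (phit_pos hκc u))) hr

lemma Gt_mono {r : ℝ} (hr : 0 ≤ r) (hr2 : r ≤ R₂) : Gt κ A D r ≤ Gt κ A D R₂ := by
  have hadd := intervalIntegral.integral_add_adjacent_intervals (a := (0:ℝ)) (b := r) (c := R₂)
    (f := fun s => Phit κ A D s * (phit κ A D s)⁻¹) (μ := MeasureTheory.volume)
    ((q_cont hκc).intervalIntegrable _ _) ((q_cont hκc).intervalIntegrable _ _)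
  have hnn : 0 ≤ ∫ s in r..R₂, Phit κ A D s * (phit κ A D s)⁻¹ :=
    intervalIntegral.integral_nonneg hr2
      (fun u hu => mul_nonneg (Phit_nonneg hκc (hr.trans hu.1))
        (inv_nonneg.2 (phit_pos hκc u).le))
  unfold Gt
  linarith

include hD

lemma ct_pos (hR₂ : 0 < R₂) : 0 < ct κ A D R₂ := by
  have hG := Gt_pos (A := A) (D := D) hκc hR₂
  exact div_pos (by positivity) (by linarith)

lemma ct_key (hR₂ : 0 < R₂) : (2 * ct κ A D R₂ / D ^ 2) * Gt κ A D R₂ = 1 / 2 := by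
  have hG := Gt_pos (A := A) (D := D) hκc hR₂
  have hG' : Gt κ A D R₂ ≠ 0 := hG.ne'
  unfold ct
  field_simp
  ring

lemma gT_le_one {r : ℝ} (hR₂ : 0 < R₂) (hr : 0 ≤ r) : gT κ A D R₂ r ≤ 1 := by
  have h1 : 0 ≤ (2 * ct κ A D R₂ / D ^ 2) * Gt κ A D r :=
    mul_nonneg (div_nonneg (by linarith [ct_pos (A := A) hD hκc hR₂]) (by positivity))
      (Gt_nonneg hκc hr)
  unfold gT; linarith

lemma gT_ge_half {r : ℝ} (hR₂ : 0 < R₂) (hr : 0 ≤ r) (hr2 : r ≤ R₂) :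
    1 / 2 ≤ gT κ A D R₂ r := by
  have hk := ct_key (A := A) hD hκc hR₂
  have hc : 0 ≤ 2 * ct κ A D R₂ / D ^ 2 :=
    div_nonneg (by linarith [ct_pos (A := A) hD hκc hR₂]) (by positivity)
  have hm := Gt_mono (A := A) (D := D) hκc hr hr2
  unfold gT
  nlinarith

lemma gT_R₂ (hR₂ : 0 < R₂) : gT κ A D R₂ R₂ = 1 / 2 := by
  have := ct_key (A := A) hD hκc hR₂
  unfold gT; linarith

lemma gT_cont : Continuous (gT κ A D R₂) := by
  have : Differentiable ℝ (Gt κ A D) := fun r => (Gt_hasDeriv (A := A) (D := D) hκc r).differentiableAt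
  exact continuous_const.sub (continuous_const.mul this.continuous)

lemma ft_integrand_cont : Continuous (fun s => phit κ A D s * gT κ A D R₂ (min s R₂)) :=
  (phit_cont hκc).mul ((gT_cont hD hκc).comp (continuous_id.min continuous_const))

lemma ft_hasDeriv (r : ℝ) :
    HasDerivAt (ft κ A D R₂) (phit κ A D r * gT κ A D R₂ (min r R₂)) r :=
  hasDerivAt_primitive0 (ft_integrand_cont hD hκc) r

lemma deriv_ft :
    deriv (ft κ A D R₂) = fun r => phit κ A D r * gT κ A D R₂ (min r R₂) :=
  funext fun r => (ft_hasDeriv hD hκc r).deriv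

lemma ft_le_Phit {r : ℝ} (hR₂ : 0 < R₂) (hr : 0 ≤ r) : ft κ A D R₂ r ≤ Phit κ A D r := by
  apply intervalIntegral.integral_mono_on hr
    ((ft_integrand_cont hD hκc).intervalIntegrable _ _)
    ((phit_cont hκc).intervalIntegrable _ _)
  intro s hs
  have h1 : gT κ A D R₂ (min s R₂) ≤ 1 :=
    gT_le_one hD hκc hR₂ (le_min hs.1 hR₂.le)
  nlinarith [phit_pos (A := A) (D := D) hκc s]

/-- First branch: second derivative of `ft` for `r < R₂`. -/
lemma ft_deriv2_lt (hR₂ : 0 < R₂) {r : ℝ} (hr : r < R₂) :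
    HasDerivAt (deriv (ft κ A D R₂))
      (-(2 / D ^ 2) * (hfun κ A r * phit κ A D r * gT κ A D R₂ r
        + ct κ A D R₂ * Phit κ A D r)) r := by
  have hφ : phit κ A D r ≠ 0 := (phit_pos hκc r).ne'
  have hD2 : D ^ 2 ≠ 0 := by positivity
  have hgd : HasDerivAt (gT κ A D R₂)
      (-(2 * ct κ A D R₂ / D ^ 2) * (Phit κ A D r * (phit κ A D r)⁻¹)) r := by
    have := ((Gt_hasDeriv (A := A) (D := D) hκc r).const_mul (2 * ct κ A D R₂ / D ^ 2)).const_sub 1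
    simp only [neg_mul]
    exact this
  have hF : HasDerivAt (fun s => phit κ A D s * gT κ A D R₂ s)
      ((-(2 / D ^ 2) * hfun κ A r * phit κ A D r) * gT κ A D R₂ r
        + phit κ A D r * (-(2 * ct κ A D R₂ / D ^ 2) * (Phit κ A D r * (phit κ A D r)⁻¹))) r :=
    (phit_hasDeriv hκc r).mul hgd
  have hF' : HasDerivAt (fun s => phit κ A D s * gT κ A D R₂ s)
      (-(2 / D ^ 2) * (hfun κ A r * phit κ A D r * gT κ A D R₂ r
        + ct κ A D R₂ * Phit κ A D r)) r := by
    convert hF using 1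
    field_simp
    ring
  have hev : (fun s => phit κ A D s * gT κ A D R₂ s) =ᶠ[nhds r] deriv (ft κ A D R₂) := by
    rw [deriv_ft hD hκc]
    filter_upwards [eventually_lt_nhds hr] with s hs
    rw [min_eq_left hs.le]
  exact hF'.congr_of_eventuallyEq hev.symm

/-- Second branch: second derivative of `ft` for `r > R₂`. -/
lemma ft_deriv2_gt {r : ℝ} (hr : R₂ < r) :
    HasDerivAt (deriv (ft κ A D R₂))
      ((-(2 / D ^ 2) * hfun κ A r * phit κ A D r) * gT κ A D R₂ R₂) r := by
  have hF : HasDerivAt (fun s => phit κ A D s * gT κ A D R₂ R₂)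
      ((-(2 / D ^ 2) * hfun κ A r * phit κ A D r) * gT κ A D R₂ R₂) r :=
    (phit_hasDeriv hκc r).mul_const _
  have hev : (fun s => phit κ A D s * gT κ A D R₂ R₂) =ᶠ[nhds r] deriv (ft κ A D R₂) := by
    rw [deriv_ft hD hκc]
    filter_upwards [eventually_gt_nhds hr] with s hs
    rw [min_eq_right hs.le]
  exact hF.congr_of_eventuallyEq hev.symm

/-! ### Agreement of the original functions with the clean versions on `Ici 0` -/

omit hD
include hA

lemma phi_eq {r : ℝ} (hr : 0 ≤ r) : phi κ A D r = phit κ A D r := by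
  unfold phi phit
  congr 1
  congr 1
  apply intervalIntegral.integral_congr
  intro u hu
  rw [Set.uIcc_of_le hr] at hu
  exact hfun_eq hA hu.1

lemma PhiF_eq {r : ℝ} (hr : 0 ≤ r) : PhiF κ A D r = Phit κ A D r := by
  unfold PhiF Phit
  apply intervalIntegral.integral_congr
  intro u hu
  rw [Set.uIcc_of_le hr] at hu
  exact phi_eq hA hκc hu.1

lemma GtI_eq {r : ℝ} (hr : 0 ≤ r) :
    (∫ s in (0:ℝ)..r, PhiF κ A D s * (phi κ A D s)⁻¹) = Gt κ A D r := by
  unfold Gt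
  apply intervalIntegral.integral_congr
  intro u hu
  rw [Set.uIcc_of_le hr] at hu
  show PhiF κ A D u * (phi κ A D u)⁻¹ = Phit κ A D u * (phit κ A D u)⁻¹
  rw [PhiF_eq hA hκc hu.1, phi_eq hA hκc hu.1]

lemma cconst_eq (hR₂ : 0 ≤ R₂) : cconst κ A D R₂ = ct κ A D R₂ := by
  unfold cconst ct
  rw [GtI_eq hA hκc hR₂]

lemma gfun_eq (hR₂ : 0 ≤ R₂) {r : ℝ} (hr : 0 ≤ r) :
    gfun κ A D R₂ r = gT κ A D R₂ r := by
  unfold gfun gT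
  rw [GtI_eq hA hκc hr, cconst_eq hA hκc hR₂]

lemma ffun_eq (hR₂ : 0 ≤ R₂) {r : ℝ} (hr : 0 ≤ r) :
    ffun κ A D R₂ r = ft κ A D R₂ r := by
  unfold ffun ft
  apply intervalIntegral.integral_congr
  intro u hu
  rw [Set.uIcc_of_le hr] at hu
  show phi κ A D u * gfun κ A D R₂ (min u R₂) = phit κ A D u * gT κ A D R₂ (min u R₂)
  rw [phi_eq hA hκc hu.1, gfun_eq hA hκc hR₂ (le_min hu.1 hR₂)]

lemma ffun_eventuallyEq (hR₂ : 0 ≤ R₂) {r : ℝ} (hr : 0 < r) :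
    ffun κ A D R₂ =ᶠ[nhds r] ft κ A D R₂ := by
  filter_upwards [eventually_gt_nhds hr] with s hs
  exact ffun_eq hA hκc hR₂ hs.le

end aux

theorem f_second_derivative_inequality
    (κ : ℝ → ℝ) (A D R₁ R₂ : ℝ)
    (hA : 0 ≤ A) (hD : 0 < D)
    (hκc : ContinuousOn κ (Set.Ici 0))
    (hκb : ∃ C, ∀ r, 0 ≤ r → |κ r| ≤ C)
    (hR₁ : 1 ≤ R₁) (hR₁' : ∀ r, R₁ ≤ r → r * κ r ≤ -A)
    (hR₂ : R₁ < R₂)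
    (hR₂' : ∀ r, R₂ ≤ r → κ r ≤ -(D ^ 2 / (R₂ * (R₂ - R₁)) + A / R₂)) :
    (∀ r, 0 < r → r < R₂ →
      DifferentiableAt ℝ (deriv (ffun κ A D R₂)) r ∧
      cconst κ A D R₂ * ffun κ A D R₂ r
        + deriv (ffun κ A D R₂) r * (r * kstar κ A r + A)
        + D ^ 2 / 2 * deriv (deriv (ffun κ A D R₂)) r ≤ 0) ∧
    (∀ r, 0 < r → r ≠ R₂ →
      DifferentiableAt ℝ (deriv (ffun κ A D R₂)) r ∧
      deriv (deriv (ffun κ A D R₂)) r ≤ 0) := by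
  have hR₂0 : (0:ℝ) < R₂ := by linarith
  -- transfer of derivatives
  have key : ∀ r : ℝ, 0 < r →
      deriv (ffun κ A D R₂) r = deriv (ft κ A D R₂) r ∧
      deriv (deriv (ffun κ A D R₂)) r = deriv (deriv (ft κ A D R₂)) r ∧
      (DifferentiableAt ℝ (deriv (ft κ A D R₂)) r →
        DifferentiableAt ℝ (deriv (ffun κ A D R₂)) r) := by
    intro r hr
    have hev := ffun_eventuallyEq (D := D) hA hκc hR₂0.le hr
    have hev' : deriv (ffun κ A D R₂) =ᶠ[nhds r] deriv (ft κ A D R₂) := hev.deriv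
    refine ⟨hev.deriv_eq, hev'.deriv_eq, fun hd => ?_⟩
    exact hd.congr_of_eventuallyEq hev'
  have Dsq : D ^ 2 ≠ 0 := by positivity
  constructor
  · intro r hr hrR
    obtain ⟨e1, e2, e3⟩ := key r hr
    have h2 := ft_deriv2_lt (A := A) hD hκc hR₂0 hrR
    refine ⟨e3 h2.differentiableAt, ?_⟩
    rw [e1, e2, (ft_hasDeriv hD hκc r).deriv, h2.deriv, cconst_eq hA hκc hR₂0.le,
      ffun_eq hA hκc hR₂0.le hr.le, hfun_eq hA hr.le, min_eq_left hrR.le]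
    have hle := ft_le_Phit (A := A) hD hκc hR₂0 hr.le
    have hc := ct_pos (A := A) hD hκc hR₂0
    have hid : ct κ A D R₂ * ft κ A D R₂ r + phit κ A D r * gT κ A D R₂ r * hfun κ A r
        + D ^ 2 / 2 * (-(2 / D ^ 2) * (hfun κ A r * phit κ A D r * gT κ A D R₂ r
          + ct κ A D R₂ * Phit κ A D r)) = ct κ A D R₂ * (ft κ A D R₂ r - Phit κ A D r) := by
      field_simp
      ring
    have hfin : ct κ A D R₂ * (ft κ A D R₂ r - Phit κ A D r) ≤ 0 :=
      mul_nonpos_of_nonneg_of_nonpos hc.le (by linarith)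
    linarith [hid, hfin]
  · intro r hr hrne
    obtain ⟨e1, e2, e3⟩ := key r hr
    rcases lt_or_gt_of_ne hrne with hlt | hgt
    · have h2 := ft_deriv2_lt (A := A) hD hκc hR₂0 hlt
      refine ⟨e3 h2.differentiableAt, ?_⟩
      rw [e2, h2.deriv]
      have hφ : (0:ℝ) < phit κ A D r := phit_pos hκc r
      have hg : 1 / 2 ≤ gT κ A D R₂ r := gT_ge_half hD hκc hR₂0 hr.le hlt.le
      have hh : 0 ≤ hfun κ A r := hfun_nonneg κ A r
      have hc : 0 < ct κ A D R₂ := ct_pos (A := A) hD hκc hR₂0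
      have hΦ : 0 ≤ Phit κ A D r := Phit_nonneg hκc hr.le
      have hD2 : 0 < D ^ 2 := by positivity
      have hX : 0 ≤ hfun κ A r * phit κ A D r * gT κ A D R₂ r
          + ct κ A D R₂ * Phit κ A D r :=
        add_nonneg (mul_nonneg (mul_nonneg hh hφ.le) (by linarith))
          (mul_nonneg hc.le hΦ)
      nlinarith [mul_nonneg (show (0:ℝ) ≤ 2 / D ^ 2 by positivity) hX]
    · have h2 := ft_deriv2_gt (A := A) hD hκc hgt
      refine ⟨e3 h2.differentiableAt, ?_⟩
      rw [e2, h2.deriv, gT_R₂ hD hκc hR₂0]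
      have hφ : (0:ℝ) < phit κ A D r := phit_pos hκc r
      have hh : 0 ≤ hfun κ A r := hfun_nonneg κ A r
      have hD2 : 0 < D ^ 2 := by positivity
      nlinarith [mul_nonneg (mul_nonneg (show (0:ℝ) ≤ 2 / D ^ 2 by positivity) hh) hφ.le]
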